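/- Let Γ be the random bipartite graph. Suppose h ∈ F(S_{l,r}(Γ)), and T, U ⊂ dom(h) are two disjoint finite bipartite subgraphs with U containing at least one vertex on each side, such that for every cross-edge E of T ∪ U not contained in T, h↾E is an isomorphism. Then h↾T is an isomorphism (i.e., h preserves the cross-type of every cross-edge in T). -/

import Mathlib

/-! Preamble: bipartite graphs, the random bipartite graph, side-preserving
permutation groups, switches, switch groups, and related notions. -/

/-- A bipartite graph on a vertex type `V`: the sides `left` and `right`
partition `V`, both sides are nonempty, and `adj` (the relation `P₁`) only holds
from `left` to `right`.  The relation `P₂` is the complement of `adj` on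
`left × right`. -/
structure BipartiteGraph (V : Type*) where
  left : Set V
  right : Set V
  adj : V → V → Prop
  left_nonempty : left.Nonempty
  right_nonempty : right.Nonempty
  union_eq : left ∪ right = Set.univ
  disjoint_sides : Disjoint left right
  adj_dom : ∀ a b, adj a b → a ∈ left ∧ b ∈ right

/-- The two sides of a bipartite graph. -/
inductive BSide : Type
  | l : BSide
  | r : BSide
deriving DecidableEq

namespace BipartiteGraph

variable {V : Type*} (Γ : BipartiteGraph V)

/-- The side of the graph indexed by an element of `BSide`. -/
def side : BSide → Set V
  | BSide.l => Γ.left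
  | BSide.r => Γ.right

/-- `Γ` is (isomorphic to) the random bipartite graph: it is countable, both
sides are infinite, and it satisfies the extension properties `Θₙ` for all `n`. -/
structure IsRandom : Prop where
  countable : Countable V
  left_infinite : Γ.left.Infinite
  right_infinite : Γ.right.Infinite
  ext_left : ∀ X₁ X₂ : Finset V, ↑X₁ ⊆ Γ.left → ↑X₂ ⊆ Γ.left → Disjoint X₁ X₂ →
      ∃ v ∈ Γ.right, (∀ x ∈ X₁, Γ.adj x v) ∧ (∀ x ∈ X₂, ¬ Γ.adj x v)
  ext_right : ∀ X₁ X₂ : Finset V, ↑X₁ ⊆ Γ.right → ↑X₂ ⊆ Γ.right → Disjoint X₁ X₂ →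
      ∃ v ∈ Γ.left, (∀ x ∈ X₁, Γ.adj v x) ∧ (∀ x ∈ X₂, ¬ Γ.adj v x)

/-- `Sym_{l,r}(Γ)`: the group of permutations of `V` preserving both sides. -/
def symLR : Subgroup (Equiv.Perm V) where
  carrier := {g | (∀ v, g v ∈ Γ.left ↔ v ∈ Γ.left) ∧ (∀ v, g v ∈ Γ.right ↔ v ∈ Γ.right)}
  one_mem' := ⟨fun _ => Iff.rfl, fun _ => Iff.rfl⟩
  mul_mem' := by
    rintro a b ⟨hal, har⟩ ⟨hbl, hbr⟩
    exact ⟨fun v => (hal (b v)).trans (hbl v), fun v => (har (b v)).trans (hbr v)⟩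
  inv_mem' := by
    rintro a ⟨hal, har⟩
    refine ⟨fun v => ?_, fun v => ?_⟩
    · have h := hal (a⁻¹ v); rw [show ∀ w, a (a⁻¹ w) = w from fun w => a.apply_symm_apply w] at h; exact h.symm
    · have h := har (a⁻¹ v); rw [show ∀ w, a (a⁻¹ w) = w from fun w => a.apply_symm_apply w] at h; exact h.symm

/-- The automorphism group of `Γ`: side-preserving permutations preserving `adj`
(and hence both cross-types). -/
def autGroup : Subgroup (Equiv.Perm V) where
  carrier := {g | g ∈ Γ.symLR ∧ ∀ a b, Γ.adj a b ↔ Γ.adj (g a) (g b)}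
  one_mem' := ⟨Γ.symLR.one_mem, fun _ _ => Iff.rfl⟩
  mul_mem' := by
    rintro a b ⟨ha, ha2⟩ ⟨hb, hb2⟩
    exact ⟨mul_mem ha hb, fun x y => (hb2 x y).trans (ha2 (b x) (b y))⟩
  inv_mem' := by
    rintro a ⟨ha, ha2⟩
    refine ⟨inv_mem ha, fun x y => ?_⟩
    have h := ha2 (a⁻¹ x) (a⁻¹ y)
    rw [show ∀ w, a (a⁻¹ w) = w from fun w => a.apply_symm_apply w, show ∀ w, a (a⁻¹ w) = w from fun w => a.apply_symm_apply w] at h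
    exact h.symm

/-- A permutation `g` is a switch with respect to a set `A` if it preserves the
sides and, for every cross-edge `(a, b)`, the cross-type of `(a, b)` is preserved
if and only if `|{a, b} ∩ A| ≠ 1`. -/
def IsSwitch (g : Equiv.Perm V) (A : Set V) : Prop :=
  g ∈ Γ.symLR ∧ ∀ a ∈ Γ.left, ∀ b ∈ Γ.right,
    ((Γ.adj a b ↔ Γ.adj (g a) (g b)) ↔ ({a, b} ∩ A : Set V).ncard ≠ 1)

/-- The restriction of a map `g` to a set `S` is a switch with respect to `A`:
the condition of `IsSwitch` holds for all cross-edges inside `S`. -/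
def IsSwitchOn (g : V → V) (S : Set V) (A : Set V) : Prop :=
  ∀ a ∈ S ∩ Γ.left, ∀ b ∈ S ∩ Γ.right,
    ((Γ.adj a b ↔ Γ.adj (g a) (g b)) ↔ ({a, b} ∩ A : Set V).ncard ≠ 1)

/-- The restriction of a map `g` to a set `S` is an isomorphism: `g` preserves
the cross-type of every cross-edge inside `S`. -/
def IsIsoOn (g : V → V) (S : Set V) : Prop :=
  ∀ a ∈ S ∩ Γ.left, ∀ b ∈ S ∩ Γ.right, (Γ.adj a b ↔ Γ.adj (g a) (g b))

end BipartiteGraph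

/-- A subgroup of the full symmetric group is closed (in the topology of
pointwise convergence) iff it contains every permutation which agrees with some
member of the subgroup on each finite subset. -/
def IsClosedSubgroup {V : Type*} (G : Subgroup (Equiv.Perm V)) : Prop :=
  ∀ g : Equiv.Perm V, (∀ F : Finset V, ∃ h ∈ G, ∀ x ∈ F, h x = g x) → g ∈ G

/-- The closed subgroup generated by a set of permutations: the intersection of
all closed subgroups containing the set. -/
def closedClosure {V : Type*} (S : Set (Equiv.Perm V)) : Subgroup (Equiv.Perm V) :=
  sInf {G : Subgroup (Equiv.Perm V) | IsClosedSubgroup G ∧ S ⊆ ↑G}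

namespace BipartiteGraph

variable {V : Type*} (Γ : BipartiteGraph V)

/-- The switch group `S_X(Γ)`: the closed subgroup of `Sym_{l,r}(Γ)` generated
by `Aut(Γ)` together with all switches with respect to a single vertex `v ∈ R_i`
for `i ∈ X`. -/
def switchGroup (X : Set BSide) : Subgroup (Equiv.Perm V) :=
  closedClosure ((Γ.autGroup : Set (Equiv.Perm V)) ∪
    {g | ∃ i ∈ X, ∃ v ∈ Γ.side i, Γ.IsSwitch g {v}})

/-- The group `S_X(Γ)* `: the closed subgroup generated by `S_X(Γ)` together with
a switch `ρ` with respect to the whole side `R_l`. -/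
def switchGroupStar (X : Set BSide) : Subgroup (Equiv.Perm V) :=
  closedClosure ((Γ.switchGroup X : Set (Equiv.Perm V)) ∪ {g | Γ.IsSwitch g Γ.left})

/-- Membership in `Aut(Γ)*`, the group of side-preserving permutations which
either preserve all cross-types on `R_l × R_r` or exchange all cross-types on
`R_l × R_r`. -/
def InAutStar (g : Equiv.Perm V) : Prop :=
  g ∈ Γ.symLR ∧
    ((∀ a ∈ Γ.left, ∀ b ∈ Γ.right, (Γ.adj a b ↔ Γ.adj (g a) (g b))) ∨
     (∀ a ∈ Γ.left, ∀ b ∈ Γ.right, (Γ.adj a b ↔ ¬ Γ.adj (g a) (g b))))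

/-- The number of cross-edges of cross-type `P₁` inside the set `S`. -/
noncomputable def edgeCount (S : Set V) : ℕ :=
  {p : V × V | p.1 ∈ S ∧ p.2 ∈ S ∧ Γ.adj p.1 p.2}.ncard

/-- `g` preserves the parity of cross-types on `S`: the number of `P₁`
cross-edges in `S` is even iff the number of `P₁` cross-edges in `g[S]` is even. -/
def PreservesParityOn (g : V → V) (S : Set V) : Prop :=
  Even (Γ.edgeCount S) ↔ Even (Γ.edgeCount (g '' S))

/-- An `(m × n)`-subgraph of `Γ`: a finite set of vertices with `m` vertices on
the left side and `n` vertices on the right side. -/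
def IsMNSubgraph (S : Set V) (m n : ℕ) : Prop :=
  S.Finite ∧ (S ∩ Γ.left).ncard = m ∧ (S ∩ Γ.right).ncard = n

end BipartiteGraph

/-! ### Auxiliary material for Lemma 5.3 -/

namespace BipartiteGraph

variable {V : Type*} (Γ : BipartiteGraph V)

/-- `g` flips the cross-type of `(a, b)`. -/
def Flip (g : V → V) (a b : V) : Prop := ¬ (Γ.adj a b ↔ Γ.adj (g a) (g b))

/-- The rectangle condition: the flip indicator is "separable". -/
def Rect (g : V → V) : Prop :=
  ∀ a ∈ Γ.left, ∀ a' ∈ Γ.left, ∀ b ∈ Γ.right, ∀ b' ∈ Γ.right,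
    ((Γ.Flip g a b ↔ Γ.Flip g a' b) ↔ (Γ.Flip g a b' ↔ Γ.Flip g a' b'))

lemma mem_symLR_iff {g : Equiv.Perm V} :
    g ∈ Γ.symLR ↔ ((∀ v, g v ∈ Γ.left ↔ v ∈ Γ.left) ∧
      (∀ v, g v ∈ Γ.right ↔ v ∈ Γ.right)) := Iff.rfl

lemma xor_iff_xor {p q p' q' : Prop} :
    (Xor' p q ↔ Xor' p' q') ↔ ((p ↔ p') ↔ (q ↔ q')) := by
  unfold Xor' Xor
  tauto

/-- The subgroup of side-preserving permutations satisfying the rectangle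
condition. -/
def rectGroup : Subgroup (Equiv.Perm V) where
  carrier := {g | g ∈ Γ.symLR ∧ Γ.Rect ⇑g}
  one_mem' := by
    refine ⟨Γ.symLR.one_mem, ?_⟩
    intro a _ a' _ b _ b' _
    simp [Flip]
  mul_mem' := by
    rintro a b ⟨haS, haR⟩ ⟨hbS, hbR⟩
    refine ⟨mul_mem haS hbS, ?_⟩
    intro x hx x' hx' y hy y' hy'
    have key : ∀ u v, Γ.Flip (⇑(a * b)) u v ↔
        Xor' (Γ.Flip (⇑b) u v) (Γ.Flip (⇑a) (b u) (b v)) := by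
      intro u v
      simp only [Flip, Equiv.Perm.mul_apply, Xor', Xor]
      tauto
    have hb1 := (Γ.mem_symLR_iff.mp hbS).1
    have hb2 := (Γ.mem_symLR_iff.mp hbS).2
    have h1 := hbR x hx x' hx' y hy y' hy'
    have h2 := haR (b x) ((hb1 x).mpr hx) (b x') ((hb1 x').mpr hx')
      (b y) ((hb2 y).mpr hy) (b y') ((hb2 y').mpr hy')
    rw [key, key, key, key, xor_iff_xor, xor_iff_xor, h1, h2]
  inv_mem' := by
    rintro a ⟨haS, haR⟩
    refine ⟨inv_mem haS, ?_⟩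
    intro x hx x' hx' y hy y' hy'
    have key : ∀ u v, Γ.Flip (⇑a⁻¹) u v ↔ Γ.Flip (⇑a) (a⁻¹ u) (a⁻¹ v) := by
      intro u v
      simp only [Flip, show ∀ w, a (a⁻¹ w) = w from fun w => a.apply_symm_apply w]
      tauto
    have hi1 := (Γ.mem_symLR_iff.mp (inv_mem haS)).1
    have hi2 := (Γ.mem_symLR_iff.mp (inv_mem haS)).2
    have := haR (a⁻¹ x) ((hi1 x).mpr hx) (a⁻¹ x') ((hi1 x').mpr hx')
      (a⁻¹ y) ((hi2 y).mpr hy) (a⁻¹ y') ((hi2 y').mpr hy')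
    rw [key, key, key, key]
    exact this

lemma rectGroup_closed : IsClosedSubgroup Γ.rectGroup := by
  intro g hg
  constructor
  · constructor
    · intro v
      obtain ⟨k, hk, hagree⟩ := hg {v}
      have := (Γ.mem_symLR_iff.mp hk.1).1 v
      rw [hagree v (Finset.mem_singleton_self v)] at this
      exact this
    · intro v
      obtain ⟨k, hk, hagree⟩ := hg {v}
      have := (Γ.mem_symLR_iff.mp hk.1).2 v
      rw [hagree v (Finset.mem_singleton_self v)] at this
      exact this
  · intro a ha a' ha' b hb b' hb'
    classical
    obtain ⟨k, hk, hagree⟩ := hg {a, a', b, b'}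
    have e1 : k a = g a := hagree a (by simp)
    have e2 : k a' = g a' := hagree a' (by simp)
    have e3 : k b = g b := hagree b (by simp)
    have e4 : k b' = g b' := hagree b' (by simp)
    have := hk.2 a ha a' ha' b hb b' hb'
    simpa only [Flip, e1, e2, e3, e4] using this

lemma ncard_pair_inter_singleton (a b v : V) :
    (({a, b} ∩ {v} : Set V).ncard = 1) ↔ (a = v ∨ b = v) := by
  by_cases hv : a = v ∨ b = v
  · have : ({a, b} ∩ {v} : Set V) = {v} := by
      apply Set.inter_eq_self_of_subset_right
      intro x hx
      rcases hx with rfl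
      rcases hv with rfl | rfl <;> simp
    rw [this, Set.ncard_singleton]
    simpa using hv
  · push_neg at hv

    have : ({a, b} ∩ {v} : Set V) = ∅ := by
      ext x
      simp only [Set.mem_inter_iff, Set.mem_insert_iff, Set.mem_singleton_iff,
        Set.mem_empty_iff_false, iff_false, not_and]
      rintro (rfl | rfl) rfl
      · exact hv.1 rfl
      · exact hv.2 rfl
    rw [this]
    simpa using hv

lemma switch_singleton_rect {g : Equiv.Perm V} {i : BSide} {v : V}
    (hv : v ∈ Γ.side i) (hsw : Γ.IsSwitch g {v}) : Γ.Rect ⇑g := by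
  intro a ha a' ha' b hb b' hb'
  have key : ∀ x ∈ Γ.left, ∀ y ∈ Γ.right, (Γ.Flip (⇑g) x y ↔ (x = v ∨ y = v)) := by
    intro x hx y hy
    have := hsw.2 x hx y hy
    unfold Flip
    rw [← ncard_pair_inter_singleton x y v]
    tauto
  rw [key a ha b hb, key a' ha' b hb, key a ha b' hb', key a' ha' b' hb']
  cases i with
  | l =>
    have hvl : v ∈ Γ.left := hv
    have hb0 : b ≠ v := fun e => Γ.disjoint_sides.ne_of_mem hvl hb e.symm
    have hb0' : b' ≠ v := fun e => Γ.disjoint_sides.ne_of_mem hvl hb' e.symm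
    tauto
  | r =>
    have hvr : v ∈ Γ.right := hv
    have ha0 : a ≠ v := fun e => Γ.disjoint_sides.ne_of_mem ha hvr e
    have ha0' : a' ≠ v := fun e => Γ.disjoint_sides.ne_of_mem ha' hvr e
    tauto

lemma switchGroup_le_rectGroup :
    Γ.switchGroup {BSide.l, BSide.r} ≤ Γ.rectGroup := by
  apply sInf_le
  refine ⟨Γ.rectGroup_closed, ?_⟩
  rintro g (hg | hg)
  · refine ⟨hg.1, ?_⟩
    intro a _ a' _ b _ b' _
    have : ∀ x y, ¬ Γ.Flip (⇑g) x y := fun x y hf => hf (hg.2 x y)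
    simp [this a b, this a' b, this a b', this a' b']
  · obtain ⟨i, _, v, hv, hsw⟩ := hg
    exact ⟨hsw.1, Γ.switch_singleton_rect hv hsw⟩

end BipartiteGraph

/-- **Lemma 5.3.** Suppose `h ∈ F(S_{l,r}(Γ))` (here represented by a member
`h` of `S_{l,r}(Γ)` restricted to the finite set `T ∪ U`), and `T`, `U` are two
disjoint finite bipartite subgraphs, `U` containing at least one vertex on each
side, such that `h` preserves the cross-type of every cross-edge of `T ∪ U` not
contained in `T`.  Then `h ↾ T` is an isomorphism. -/
theorem isIsoOn_of_isIsoOn_outside {V : Type*} (Γ : BipartiteGraph V)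
    (hΓ : Γ.IsRandom) (h : Equiv.Perm V) (hmem : h ∈ Γ.switchGroup {BSide.l, BSide.r})
    (T U : Finset V) (hdisj : Disjoint T U)
    (hTl : ((T : Set V) ∩ Γ.left).Nonempty) (hTr : ((T : Set V) ∩ Γ.right).Nonempty)
    (hUl : ((U : Set V) ∩ Γ.left).Nonempty) (hUr : ((U : Set V) ∩ Γ.right).Nonempty)
    (hout : ∀ a ∈ ((T : Set V) ∪ (U : Set V)) ∩ Γ.left,
      ∀ b ∈ ((T : Set V) ∪ (U : Set V)) ∩ Γ.right,
      ¬(a ∈ (T : Set V) ∧ b ∈ (T : Set V)) → (Γ.adj a b ↔ Γ.adj (h a) (h b))) :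
    Γ.IsIsoOn (⇑h) (T : Set V) := by
  have hrect : Γ.Rect ⇑h := (Γ.switchGroup_le_rectGroup hmem).2
  obtain ⟨u₁, hu₁U, hu₁l⟩ := hUl
  obtain ⟨u₂, hu₂U, hu₂r⟩ := hUr
  rintro a ⟨haT, hal⟩ b ⟨hbT, hbr⟩
  have hu₁T : u₁ ∉ (T : Set V) := fun hc =>
    (Finset.disjoint_left.mp hdisj hc) hu₁U
  have hu₂T : u₂ ∉ (T : Set V) := fun hc =>
    (Finset.disjoint_left.mp hdisj hc) hu₂U
  have f1 : ¬ Γ.Flip (⇑h) u₁ b := fun hf => hf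
    (hout u₁ ⟨Or.inr hu₁U, hu₁l⟩ b ⟨Or.inl hbT, hbr⟩ (fun hc => hu₁T hc.1))
  have f2 : ¬ Γ.Flip (⇑h) a u₂ := fun hf => hf
    (hout a ⟨Or.inl haT, hal⟩ u₂ ⟨Or.inr hu₂U, hu₂r⟩ (fun hc => hu₂T hc.2))
  have f3 : ¬ Γ.Flip (⇑h) u₁ u₂ := fun hf => hf
    (hout u₁ ⟨Or.inr hu₁U, hu₁l⟩ u₂ ⟨Or.inr hu₂U, hu₂r⟩ (fun hc => hu₁T hc.1))
  have hr := hrect a hal u₁ hu₁l b hbr u₂ hu₂r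
  have : ¬ Γ.Flip (⇑h) a b := by tauto
  exact not_not.mp this
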